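/- Let X be a reflexive real Banach space, L an anti-selfdual Lagrangian on X × X* such that for every p ∈ X* the function x ↦ L(x,p) is bounded on bounded subsets of X, and let A : D(A) ⊆ X → X* be skew-adjoint modulo the boundary operators (b₁,b₂) : D(b₁,b₂) ⊆ X → H₁ × H₂. Define M : X × X* → ℝ ∪ {+∞} by M(x,p) = L(x, Ax + p) + ½‖b₁(x)‖²_{H₁} + ½‖b₂(x)‖²_{H₂} if x ∈ D(A) ∩ D(b₁,b₂), and M(x,p) = +∞ otherwise. Then M is an anti-selfdual Lagrangian on X × X*. -/

import Mathlib

open scoped RealInnerProductSpace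

noncomputable section

/-- Convexity for `EReal`-valued functions. -/
def ERealConvexOn {E : Type*} [AddCommGroup E] [Module ℝ E] (f : E → EReal) : Prop :=
  ∀ x y : E, ∀ s t : ℝ, 0 ≤ s → 0 ≤ t → s + t = 1 →
    f (s • x + t • y) ≤ (s : EReal) * f x + (t : EReal) * f y

/-- The Legendre–Fenchel dual, in both variables, of a Lagrangian `L` on `X × X*`. -/
def lagrangianDual {X : Type*} [NormedAddCommGroup X] [NormedSpace ℝ X]
    (L : X × (X →L[ℝ] ℝ) → EReal) (q : X →L[ℝ] ℝ) (y : X) : EReal :=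
  ⨆ x : X, ⨆ p : X →L[ℝ] ℝ, ((q x + p y : ℝ) : EReal) - L (x, p)

/-- A Lagrangian is anti-selfdual if `L*(p,x) = L(−x,−p)` for all `(p,x)`. -/
def IsASD {X : Type*} [NormedAddCommGroup X] [NormedSpace ℝ X]
    (L : X × (X →L[ℝ] ℝ) → EReal) : Prop :=
  ∀ (p : X →L[ℝ] ℝ) (x : X), lagrangianDual L p x = L (-x, -p)

/-- Reflexivity of a normed space. -/
def IsReflexiveSpace (X : Type*) [NormedAddCommGroup X] [NormedSpace ℝ X] : Prop :=
  ∀ F : (X →L[ℝ] ℝ) →L[ℝ] ℝ, ∃ x : X, ∀ p : X →L[ℝ] ℝ, F p = p x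

/-- `A : D(A) ⊆ X → X*` is skew-adjoint modulo the boundary operators
`(b₁,b₂) : D(b₁,b₂) ⊆ X → H₁ × H₂`. -/
def SkewAdjointModBoundary {X H₁ H₂ : Type*}
    [NormedAddCommGroup X] [NormedSpace ℝ X]
    [NormedAddCommGroup H₁] [InnerProductSpace ℝ H₁]
    [NormedAddCommGroup H₂] [InnerProductSpace ℝ H₂]
    (DA Db : Subspace ℝ X)
    (A : DA →ₗ[ℝ] (X →L[ℝ] ℝ))
    (b₁ : Db →ₗ[ℝ] H₁) (b₂ : Db →ₗ[ℝ] H₂) : Prop :=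
  -- (1) S = D(A) ∩ D(b₁,b₂) is dense in X
  Dense {x : X | x ∈ DA ∧ x ∈ Db} ∧
  -- (2) ker(b₁,b₂) ∩ D(A) is dense in X
  Dense {x : X | ∃ h : x ∈ DA ∧ x ∈ Db, b₁ ⟨x, h.2⟩ = 0 ∧ b₂ ⟨x, h.2⟩ = 0} ∧
  -- (3) the image of S under (b₁,b₂) is dense in H₁ × H₂
  Dense {vw : H₁ × H₂ | ∃ (x : X) (h : x ∈ DA ∧ x ∈ Db), vw = (b₁ ⟨x, h.2⟩, b₂ ⟨x, h.2⟩)} ∧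
  -- (4) y ∈ S iff the corresponding supremum is finite
  (∀ y : X, (y ∈ DA ∧ y ∈ Db) ↔
    BddAbove {r : ℝ | ∃ (x : X) (h : x ∈ DA ∧ x ∈ Db), ‖x‖ < 1 ∧
      r = A ⟨x, h.1⟩ y - (‖b₁ ⟨x, h.2⟩‖ ^ 2 + ‖b₂ ⟨x, h.2⟩‖ ^ 2) / 2}) ∧
  -- (5) integration by parts formula on S
  (∀ (x y : X) (hx : x ∈ DA ∧ x ∈ Db) (hy : y ∈ DA ∧ y ∈ Db),
    A ⟨x, hx.1⟩ y = -(A ⟨y, hy.1⟩ x)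
      + ⟪b₁ ⟨x, hx.2⟩, b₁ ⟨y, hy.2⟩⟫ - ⟪b₂ ⟨x, hx.2⟩, b₂ ⟨y, hy.2⟩⟫)

private lemma aux_le_of_forall_lt {a b : EReal} (h : ∀ c : ℝ, (c : EReal) < a → (c : EReal) ≤ b) :
    a ≤ b := by
  by_contra hab
  push_neg at hab
  obtain ⟨c, hbc, hca⟩ := EReal.exists_between_coe_real hab
  exact absurd (h c hca) (not_le.2 hbc)

private lemma aux_lt_shift (a b : ℝ) (T : EReal) (h : (a : EReal) < T + (b : EReal)) :
    ((a - b : ℝ) : EReal) < T := by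
  induction T using EReal.rec with
  | bot => simp at h
  | coe t =>
      rw [← EReal.coe_add, EReal.coe_lt_coe_iff] at h
      exact EReal.coe_lt_coe_iff.2 (by linarith)
  | top => exact EReal.coe_lt_top _

private lemma aux_sq_small (v η ε : ℝ) (h0 : 0 ≤ v) (hv : v < η) (hη1 : η ≤ 1)
    (hηε : η ≤ ε) : v ^ 2 / 2 ≤ ε := by nlinarith

private lemma aux_dense_point {α : Type*} [MetricSpace α] {s : Set α} (h : Dense s) (x : α)
    (ε : ℝ) (hε : 0 < ε) : ∃ y ∈ s, dist x y < ε := by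
  obtain ⟨y, hy1, hy2⟩ := Metric.dense_iff.1 h x ε hε
  exact ⟨y, hy2, by rw [dist_comm]; exact Metric.mem_ball.1 hy1⟩

set_option maxHeartbeats 1000000 in
/-- composing an ASD Lagrangian with an unbounded operator that is skew-adjoint
modulo boundary operators, adding the corresponding boundary terms, yields an ASD Lagrangian. -/
theorem stmt1 {X H₁ H₂ : Type*}
    [NormedAddCommGroup X] [NormedSpace ℝ X] [CompleteSpace X]
    [NormedAddCommGroup H₁] [InnerProductSpace ℝ H₁] [CompleteSpace H₁]
    [NormedAddCommGroup H₂] [InnerProductSpace ℝ H₂] [CompleteSpace H₂]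
    (hrefl : IsReflexiveSpace X)
    (L : X × (X →L[ℝ] ℝ) → EReal)
    (hconv : ERealConvexOn L)
    (hlsc : LowerSemicontinuous L)
    (hproper : ∃ z, L z ≠ ⊤) (hreal : ∀ z, L z ≠ ⊥)
    (hASD : IsASD L)
    (hbdd : ∀ (p : X →L[ℝ] ℝ) (r : ℝ), ∃ C : ℝ, ∀ x : X, ‖x‖ ≤ r → L (x, p) ≤ (C : EReal))
    (DA Db : Subspace ℝ X)
    (A : DA →ₗ[ℝ] (X →L[ℝ] ℝ))
    (b₁ : Db →ₗ[ℝ] H₁) (b₂ : Db →ₗ[ℝ] H₂)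
    (hA : SkewAdjointModBoundary DA Db A b₁ b₂)
    (M : X × (X →L[ℝ] ℝ) → EReal)
    (hM₁ : ∀ (x : X) (p : X →L[ℝ] ℝ) (h : x ∈ DA ∧ x ∈ Db),
      M (x, p) = L (x, A ⟨x, h.1⟩ + p)
        + ((‖b₁ ⟨x, h.2⟩‖ ^ 2 / 2 + ‖b₂ ⟨x, h.2⟩‖ ^ 2 / 2 : ℝ) : EReal))
    (hM₂ : ∀ (x : X) (p : X →L[ℝ] ℝ), ¬(x ∈ DA ∧ x ∈ Db) → M (x, p) = ⊤) :
    IsASD M := by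
  obtain ⟨hd1, hd2, hd3, hiff, hibp⟩ := hA
  -- L is finite everywhere; real-valued version ℓ
  set ℓ : X → (X →L[ℝ] ℝ) → ℝ := fun x p => (L (x, p)).toReal with hℓdef
  have hLfin : ∀ (x : X) (p : X →L[ℝ] ℝ), L (x, p) = ((ℓ x p : ℝ) : EReal) := by
    intro x p
    refine (EReal.coe_toReal ?_ (hreal (x, p))).symm
    obtain ⟨C, hC⟩ := hbdd p ‖x‖
    exact ne_top_of_le_ne_top (EReal.coe_ne_top C) (hC x le_rfl)
  have hbddR : ∀ (p : X →L[ℝ] ℝ) (R : ℝ), ∃ C : ℝ, ∀ x : X, ‖x‖ ≤ R → ℓ x p ≤ C := by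
    intro p R
    obtain ⟨C, hC⟩ := hbdd p R
    exact ⟨C, fun x hx => EReal.coe_le_coe_iff.1 (by rw [← hLfin]; exact hC x hx)⟩
  -- real convexity in x for fixed p
  have hconvR : ∀ (x₁ x₂ : X) (p : X →L[ℝ] ℝ) (s t : ℝ), 0 ≤ s → 0 ≤ t → s + t = 1 →
      ℓ (s • x₁ + t • x₂) p ≤ s * ℓ x₁ p + t * ℓ x₂ p := by
    intro x₁ x₂ p s t hs ht hst
    have h := hconv (x₁, p) (x₂, p) s t hs ht hst
    have hsm : s • ((x₁, p) : X × (X →L[ℝ] ℝ)) + t • (x₂, p) = (s • x₁ + t • x₂, p) := by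
      simp [Prod.smul_mk, Prod.mk_add_mk, ← add_smul, hst]
    rw [hsm, hLfin, hLfin, hLfin, ← EReal.coe_mul, ← EReal.coe_mul, ← EReal.coe_add,
      EReal.coe_le_coe_iff] at h
    exact h
  -- upper semicontinuity in x for fixed p
  have husc : ∀ (x₀ : X) (p : X →L[ℝ] ℝ) (ε : ℝ), 0 < ε →
      ∃ δ : ℝ, 0 < δ ∧ ∀ x : X, ‖x - x₀‖ ≤ δ → ℓ x p ≤ ℓ x₀ p + ε := by
    intro x₀ p ε hε
    obtain ⟨C₀, hC₀⟩ := hbddR p (‖x₀‖ + 1)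
    set C := max C₀ (ℓ x₀ p) with hC
    have hCb : ∀ x : X, ‖x‖ ≤ ‖x₀‖ + 1 → ℓ x p ≤ C := fun x hx =>
      le_trans (hC₀ x hx) (le_max_left _ _)
    set D := C - ℓ x₀ p with hD
    have hD0 : 0 ≤ D := by
      have : ℓ x₀ p ≤ C := le_max_right _ _
      simp [hD]; linarith
    refine ⟨min 1 (ε / (D + 1)), lt_min one_pos (by positivity), ?_⟩
    intro x hx
    rcases eq_or_ne x x₀ with h | h
    · rw [h]; linarith
    · set t := ‖x - x₀‖ with htdef
      have ht0 : 0 < t := by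
        rw [htdef, norm_pos_iff]
        exact sub_ne_zero_of_ne h
      have ht1 : t ≤ 1 := le_trans hx (min_le_left _ _)
      have htε : t ≤ ε / (D + 1) := le_trans hx (min_le_right _ _)
      set z := x₀ + t⁻¹ • (x - x₀) with hz
      have hzn : ‖z‖ ≤ ‖x₀‖ + 1 := by
        have h1 : ‖t⁻¹ • (x - x₀)‖ = 1 := by
          rw [norm_smul, Real.norm_eq_abs, abs_inv, abs_of_pos ht0, ← htdef]
          field_simp
        calc ‖z‖ ≤ ‖x₀‖ + ‖t⁻¹ • (x - x₀)‖ := norm_add_le _ _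
          _ = ‖x₀‖ + 1 := by rw [h1]
      have hcomb : t • z + (1 - t) • x₀ = x := by
        have h2 : t • (t⁻¹ • (x - x₀)) = x - x₀ := by
          rw [smul_smul, mul_inv_cancel₀ ht0.ne', one_smul]
        rw [hz, smul_add, h2, sub_smul, one_smul]
        abel
      have h3 := hconvR z x₀ p t (1 - t) ht0.le (by linarith) (by ring)
      rw [hcomb] at h3
      have hzC : ℓ z p ≤ C := hCb z hzn
      have htD : t * D ≤ ε := by
        have h4 : t * (D + 1) ≤ ε := (le_div_iff₀ (by positivity)).1 htε
        nlinarith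
      nlinarith [h3, hzC]
  clear_value ℓ
  -- main proof
  intro q y
  by_cases hy : y ∈ DA ∧ y ∈ Db
  · -- y ∈ S : the main computation
    have hny : -y ∈ DA ∧ -y ∈ Db := ⟨DA.neg_mem hy.1, Db.neg_mem hy.2⟩
    have hAy : A ⟨-y, hny.1⟩ + -q = -(A ⟨y, hy.1⟩ + q) := by
      rw [show (⟨-y, hny.1⟩ : DA) = -(⟨y, hy.1⟩ : DA) from rfl, map_neg, neg_add]
    have hb1y : b₁ ⟨-y, hny.2⟩ = -(b₁ ⟨y, hy.2⟩) := by
      rw [show (⟨-y, hny.2⟩ : Db) = -(⟨y, hy.2⟩ : Db) from rfl, map_neg]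
    have hb2y : b₂ ⟨-y, hny.2⟩ = -(b₂ ⟨y, hy.2⟩) := by
      rw [show (⟨-y, hny.2⟩ : Db) = -(⟨y, hy.2⟩ : Db) from rfl, map_neg]
    rw [hM₁ (-y) (-q) hny, hAy, hb1y, hb2y, norm_neg, norm_neg,
      ← hASD (A ⟨y, hy.1⟩ + q) y]
    set P : X →L[ℝ] ℝ := A ⟨y, hy.1⟩ + q with hPdef
    set penY : ℝ := ‖b₁ ⟨y, hy.2⟩‖ ^ 2 / 2 + ‖b₂ ⟨y, hy.2⟩‖ ^ 2 / 2 with hpenYdef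
    clear_value P penY
    apply le_antisymm
    · -- M* ≤ L* + penY
      rw [lagrangianDual]
      refine iSup_le fun x => iSup_le fun p => ?_
      by_cases hx : x ∈ DA ∧ x ∈ Db
      · rw [hM₁ x p hx, hLfin]
        set r : X →L[ℝ] ℝ := A ⟨x, hx.1⟩ + p with hrdef
        clear_value r
        have hsT : ((P x + r y - ℓ x r : ℝ) : EReal) ≤ lagrangianDual L P y := by
          have heq : ((P x + r y - ℓ x r : ℝ) : EReal)
              = ((P x + r y : ℝ) : EReal) - L (x, r) := by
            rw [hLfin, ← EReal.coe_sub]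
          rw [heq, lagrangianDual]
          exact le_iSup_of_le x (le_iSup_of_le r le_rfl)
        have hibpx := hibp x y hx hy
        have hry : r y = A ⟨x, hx.1⟩ y + p y := by
          rw [hrdef]; exact ContinuousLinearMap.add_apply _ _ _
        have hPx : P x = A ⟨y, hy.1⟩ x + q x := by
          rw [hPdef]; exact ContinuousLinearMap.add_apply _ _ _
        have e1 : ‖b₁ ⟨x, hx.2⟩ + b₁ ⟨y, hy.2⟩‖ ^ 2
            = ‖b₁ ⟨x, hx.2⟩‖ ^ 2 + 2 * ⟪b₁ ⟨x, hx.2⟩, b₁ ⟨y, hy.2⟩⟫ + ‖b₁ ⟨y, hy.2⟩‖ ^ 2 :=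
          norm_add_sq_real _ _
        have e2 : ‖b₂ ⟨x, hx.2⟩ - b₂ ⟨y, hy.2⟩‖ ^ 2
            = ‖b₂ ⟨x, hx.2⟩‖ ^ 2 - 2 * ⟪b₂ ⟨x, hx.2⟩, b₂ ⟨y, hy.2⟩⟫ + ‖b₂ ⟨y, hy.2⟩‖ ^ 2 :=
          norm_sub_sq_real _ _
        have key : q x + p y - (ℓ x r + (‖b₁ ⟨x, hx.2⟩‖ ^ 2 / 2 + ‖b₂ ⟨x, hx.2⟩‖ ^ 2 / 2))
            ≤ (P x + r y - ℓ x r) + penY := by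
          have n1 := sq_nonneg ‖b₁ ⟨x, hx.2⟩ + b₁ ⟨y, hy.2⟩‖
          have n2 := sq_nonneg ‖b₂ ⟨x, hx.2⟩ - b₂ ⟨y, hy.2⟩‖
          linarith [hibpx, hry, hPx, e1, e2, n1, n2, hpenYdef]
        rw [← EReal.coe_add, ← EReal.coe_sub]
        refine le_trans (EReal.coe_le_coe_iff.2 key) ?_
        rw [EReal.coe_add]
        exact add_le_add hsT le_rfl
      · rw [hM₂ x p hx, show ((q x + p y : ℝ) : EReal) - ⊤ = ⊥ from by simp]
        exact bot_le
    · -- L* + penY ≤ M*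
      refine aux_le_of_forall_lt fun c hc => ?_
      have hc' := aux_lt_shift c penY _ hc
      rw [lagrangianDual, lt_iSup_iff] at hc'
      obtain ⟨x₀, hc'⟩ := hc'
      rw [lt_iSup_iff] at hc'
      obtain ⟨r, hc'⟩ := hc'
      rw [hLfin x₀ r, ← EReal.coe_sub, EReal.coe_lt_coe_iff] at hc'
      -- hc' : c - penY < P x₀ + r y - ℓ x₀ r
      set ε : ℝ := P x₀ + r y - ℓ x₀ r + penY - c with hεdef
      have hε0 : 0 < ε := by rw [hεdef]; linarith
      set ε₁ : ℝ := ε / 4 with hε₁def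
      have hε₁0 : 0 < ε₁ := by rw [hε₁def]; positivity
      clear_value ε ε₁
      obtain ⟨δ₁, hδ₁0, hδ₁⟩ := husc x₀ r ε₁ hε₁0
      have hδ₂0 : 0 < min δ₁ (ε₁ / (‖P‖ + 1)) := lt_min hδ₁0 (by positivity)
      set η : ℝ := min 1 ε₁ with hηdef
      have hη0 : 0 < η := lt_min one_pos hε₁0
      have hη1 : η ≤ 1 := min_le_left _ _
      have hηε : η ≤ ε₁ := min_le_right _ _
      clear_value η
      obtain ⟨vw, hvw_mem, hvw_dist⟩ :=
        aux_dense_point hd3 (-(b₁ ⟨y, hy.2⟩), b₂ ⟨y, hy.2⟩) η hη0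
      obtain ⟨z, hz, hzeq⟩ := hvw_mem
      rw [hzeq, Prod.dist_eq] at hvw_dist
      obtain ⟨d1, d2⟩ := max_lt_iff.1 hvw_dist
      obtain ⟨u, hu_mem, hu_dist⟩ := aux_dense_point hd2 (x₀ - z) (min δ₁ (ε₁ / (‖P‖ + 1))) hδ₂0
      obtain ⟨hu, hub₁, hub₂⟩ := hu_mem
      set x : X := u + z with hxdef
      have hx : x ∈ DA ∧ x ∈ Db := ⟨DA.add_mem hu.1 hz.1, Db.add_mem hu.2 hz.2⟩
      have hxb₁ : b₁ ⟨x, hx.2⟩ = b₁ ⟨z, hz.2⟩ := by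
        rw [show (⟨x, hx.2⟩ : Db) = (⟨u, hu.2⟩ : Db) + ⟨z, hz.2⟩ from rfl, map_add, hub₁, zero_add]
      have hxb₂ : b₂ ⟨x, hx.2⟩ = b₂ ⟨z, hz.2⟩ := by
        rw [show (⟨x, hx.2⟩ : Db) = (⟨u, hu.2⟩ : Db) + ⟨z, hz.2⟩ from rfl, map_add, hub₂, zero_add]
      clear_value x
      set p : X →L[ℝ] ℝ := r - A ⟨x, hx.1⟩ with hpdef
      clear_value p
      have hAr : A ⟨x, hx.1⟩ + p = r := by rw [hpdef]; abel
      have hdist : ‖x - x₀‖ ≤ min δ₁ (ε₁ / (‖P‖ + 1)) := by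
        have h1 : x - x₀ = -((x₀ - z) - u) := by rw [hxdef]; abel
        rw [h1, norm_neg, ← dist_eq_norm]
        exact hu_dist.le
      have hℓx : ℓ x r ≤ ℓ x₀ r + ε₁ := hδ₁ x (le_trans hdist (min_le_left _ _))
      have hPxlow : P x₀ - ε₁ ≤ P x := by
        have hK1 : |P x - P x₀| ≤ ‖P‖ * ‖x - x₀‖ := by
          rw [← map_sub]
          exact P.le_opNorm _
        have h6 : ‖x - x₀‖ ≤ ε₁ / (‖P‖ + 1) := le_trans hdist (min_le_right _ _)
        have h7 : (0:ℝ) ≤ ‖P‖ := norm_nonneg _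
        have h10 : (0:ℝ) < ‖P‖ + 1 := by positivity
        have h9 : ‖P‖ * (ε₁ / (‖P‖ + 1)) ≤ ε₁ := by
          rw [mul_div_assoc', div_le_iff₀ h10]
          nlinarith [h7, hε₁0]
        have h5 : ‖P‖ * ‖x - x₀‖ ≤ ε₁ :=
          le_trans (mul_le_mul_of_nonneg_left h6 h7) h9
        have := abs_le.1 (hK1.trans h5)
        linarith [this.1, this.2]
      have hnb1 : ‖b₁ ⟨x, hx.2⟩ + b₁ ⟨y, hy.2⟩‖ < η := by
        rw [hxb₁]
        have h11 : -(b₁ ⟨y, hy.2⟩) - b₁ ⟨z, hz.2⟩ = -(b₁ ⟨z, hz.2⟩ + b₁ ⟨y, hy.2⟩) := by abel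
        rw [dist_eq_norm, h11, norm_neg] at d1
        exact d1
      have hnb2 : ‖b₂ ⟨x, hx.2⟩ - b₂ ⟨y, hy.2⟩‖ < η := by
        rw [hxb₂]
        rw [dist_eq_norm, norm_sub_rev] at d2
        exact d2
      have hbd1 : ‖b₁ ⟨x, hx.2⟩ + b₁ ⟨y, hy.2⟩‖ ^ 2 / 2 ≤ ε₁ :=
        aux_sq_small _ _ _ (norm_nonneg _) hnb1 hη1 hηε
      have hbd2 : ‖b₂ ⟨x, hx.2⟩ - b₂ ⟨y, hy.2⟩‖ ^ 2 / 2 ≤ ε₁ :=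
        aux_sq_small _ _ _ (norm_nonneg _) hnb2 hη1 hηε
      rw [lagrangianDual]
      refine le_iSup_of_le x (le_iSup_of_le p ?_)
      rw [hM₁ x p hx, hAr, hLfin, ← EReal.coe_add, ← EReal.coe_sub, EReal.coe_le_coe_iff]
      have hpy : p y = r y - A ⟨x, hx.1⟩ y := by
        rw [hpdef]; exact ContinuousLinearMap.sub_apply _ _ _
      have hibpx := hibp x y hx hy
      have hPxd : P x = A ⟨y, hy.1⟩ x + q x := by
        rw [hPdef]; exact ContinuousLinearMap.add_apply _ _ _
      have e1 : ‖b₁ ⟨x, hx.2⟩ + b₁ ⟨y, hy.2⟩‖ ^ 2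
          = ‖b₁ ⟨x, hx.2⟩‖ ^ 2 + 2 * ⟪b₁ ⟨x, hx.2⟩, b₁ ⟨y, hy.2⟩⟫ + ‖b₁ ⟨y, hy.2⟩‖ ^ 2 :=
        norm_add_sq_real _ _
      have e2 : ‖b₂ ⟨x, hx.2⟩ - b₂ ⟨y, hy.2⟩‖ ^ 2
          = ‖b₂ ⟨x, hx.2⟩‖ ^ 2 - 2 * ⟪b₂ ⟨x, hx.2⟩, b₂ ⟨y, hy.2⟩⟫ + ‖b₂ ⟨y, hy.2⟩‖ ^ 2 :=
        norm_sub_sq_real _ _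
      linarith [hpy, hibpx, hPxd, e1, e2, hbd1, hbd2, hPxlow, hℓx, hpenYdef, hεdef, hε₁def]
  · -- y ∉ S : both sides are ⊤
    have hny : ¬(-y ∈ DA ∧ -y ∈ Db) := by
      rintro ⟨h1, h2⟩
      exact hy ⟨by simpa using DA.neg_mem h1, by simpa using Db.neg_mem h2⟩
    rw [hM₂ _ _ hny, lagrangianDual]
    have hnb : ¬ BddAbove {r : ℝ | ∃ (x : X) (h : x ∈ DA ∧ x ∈ Db), ‖x‖ < 1 ∧
        r = A ⟨x, h.1⟩ y - (‖b₁ ⟨x, h.2⟩‖ ^ 2 + ‖b₂ ⟨x, h.2⟩‖ ^ 2) / 2} :=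
      fun hb => hy ((hiff y).2 hb)
    rw [not_bddAbove_iff] at hnb
    obtain ⟨C₀, hC₀⟩ := hbddR 0 1
    have key : ∀ N : ℝ, ∃ (x : X) (p : X →L[ℝ] ℝ),
        (N : EReal) < ((q x + p y : ℝ) : EReal) - M (x, p) := by
      intro N
      obtain ⟨v, ⟨x, hx, hx1, hveq⟩, hvgt⟩ := hnb (N + ‖q‖ + C₀)
      have hnx : -x ∈ DA ∧ -x ∈ Db := ⟨DA.neg_mem hx.1, Db.neg_mem hx.2⟩
      refine ⟨-x, A ⟨x, hx.1⟩, ?_⟩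
      have hAeq : A ⟨-x, hnx.1⟩ + A ⟨x, hx.1⟩ = 0 := by
        rw [show (⟨-x, hnx.1⟩ : DA) = -(⟨x, hx.1⟩ : DA) from rfl, map_neg, neg_add_cancel]
      have hb1 : b₁ ⟨-x, hnx.2⟩ = -(b₁ ⟨x, hx.2⟩) := by
        rw [show (⟨-x, hnx.2⟩ : Db) = -(⟨x, hx.2⟩ : Db) from rfl, map_neg]
      have hb2 : b₂ ⟨-x, hnx.2⟩ = -(b₂ ⟨x, hx.2⟩) := by
        rw [show (⟨-x, hnx.2⟩ : Db) = -(⟨x, hx.2⟩ : Db) from rfl, map_neg]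
      rw [hM₁ (-x) _ hnx, hAeq, hLfin, hb1, hb2, norm_neg, norm_neg,
        ← EReal.coe_add, ← EReal.coe_sub, EReal.coe_lt_coe_iff]
      have h1 : ℓ (-x) 0 ≤ C₀ := hC₀ (-x) (by rw [norm_neg]; exact hx1.le)
      have h2 : |q (-x)| ≤ ‖q‖ := by
        calc |q (-x)| = ‖q (-x)‖ := rfl
          _ ≤ ‖q‖ * ‖-x‖ := q.le_opNorm _
          _ ≤ ‖q‖ * 1 := by
              have := norm_nonneg q
              have h3 : ‖-x‖ ≤ 1 := by rw [norm_neg]; exact hx1.le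
              nlinarith
          _ = ‖q‖ := mul_one _
      rw [hveq] at hvgt
      have h4 := abs_le.1 h2
      linarith [h4.1, h4.2]
    refine iSup_eq_top.2 ?_
    intro b hb
    induction b using EReal.rec with
    | bot =>
        obtain ⟨x, p, hxp⟩ := key 0
        exact ⟨x, lt_of_lt_of_le (lt_trans (EReal.bot_lt_coe 0) hxp) (le_iSup (fun p => ((q x + p y : ℝ) : EReal) - M (x, p)) p)⟩
    | coe c =>
        obtain ⟨x, p, hxp⟩ := key c
        exact ⟨x, lt_of_lt_of_le hxp (le_iSup (fun p => ((q x + p y : ℝ) : EReal) - M (x, p)) p)⟩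
    | top => exact absurd hb (lt_irrefl ⊤)
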